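/- Let K = 1 and assume a_{10} > 1, a_{11} > 1 and (a_{10} − a_{11})² − a_{1•} ≤ 0. Then the LOOCV squared prediction error PE is strictly decreasing on [0, ∞): for all 0 ≤ λ₁ < λ₂ one has PE(λ₂) < PE(λ₁); hence its infimum is approached only as λ → ∞ and is not attained at any finite λ. -/

import Mathlib

/-- Leave-one-out cross-validated squared prediction error for a saturated model with `K`
categories, counts `a0 k` (nonevents) and `a1 k` (events), and ridge penalty `l`. -/
noncomputable def loocvPE (K : ℕ) (a0 a1 : Fin K → ℕ) (l : ℝ) : ℝ :=
  (1 / ∑ k : Fin K, ((a0 k : ℝ) + (a1 k : ℝ))) *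
    ∑ k : Fin K,
      ((a0 k : ℝ) *
          (((a1 k : ℝ) + 2 * l) / ((a0 k : ℝ) + (a1 k : ℝ) - 1 + 4 * l)) ^ 2 +
       (a1 k : ℝ) *
          (1 - ((a1 k : ℝ) - 1 + 2 * l) / ((a0 k : ℝ) + (a1 k : ℝ) - 1 + 4 * l)) ^ 2)

lemma loocvPE_one (a10 a11 : ℕ) (l : ℝ) :
    loocvPE 1 (fun _ => a10) (fun _ => a11) l =
      (1 / ((a10 : ℝ) + (a11 : ℝ))) *
        ((a10 : ℝ) * (((a11 : ℝ) + 2 * l) / ((a10 : ℝ) + (a11 : ℝ) - 1 + 4 * l)) ^ 2 +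
         (a11 : ℝ) * (1 - ((a11 : ℝ) - 1 + 2 * l) / ((a10 : ℝ) + (a11 : ℝ) - 1 + 4 * l)) ^ 2) := by
  simp [loocvPE]

lemma key_dec (A B l1 l2 : ℝ) (hA : 2 ≤ A) (hB : 2 ≤ B)
    (hle : (A - B) ^ 2 - (A + B) ≤ 0) (hl1 : 0 ≤ l1) (h12 : l1 < l2) :
    (1 / (A + B)) * (A * ((B + 2 * l2) / (A + B - 1 + 4 * l2)) ^ 2 +
        B * (1 - (B - 1 + 2 * l2) / (A + B - 1 + 4 * l2)) ^ 2) <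
    (1 / (A + B)) * (A * ((B + 2 * l1) / (A + B - 1 + 4 * l1)) ^ 2 +
        B * (1 - (B - 1 + 2 * l1) / (A + B - 1 + 4 * l1)) ^ 2) := by
  have hl2 : (0:ℝ) ≤ l2 := le_of_lt (lt_of_le_of_lt hl1 h12)
  have hd1 : 0 < A + B - 1 + 4 * l1 := by nlinarith
  have hd2 : 0 < A + B - 1 + 4 * l2 := by nlinarith
  have hn : 0 < A + B := by nlinarith
  have ex : ∀ l : ℝ, 0 < A + B - 1 + 4 * l →
      A * ((B + 2 * l) / (A + B - 1 + 4 * l)) ^ 2 +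
        B * (1 - (B - 1 + 2 * l) / (A + B - 1 + 4 * l)) ^ 2 =
      (A * (B + 2 * l) ^ 2 + B * (A + 2 * l) ^ 2) / (A + B - 1 + 4 * l) ^ 2 := by
    intro l hd
    rw [show (1 - (B - 1 + 2 * l) / (A + B - 1 + 4 * l)) = (A + 2 * l) / (A + B - 1 + 4 * l)
        from by rw [eq_div_iff hd.ne', sub_mul, div_mul_cancel₀ _ hd.ne']; ring, div_pow, div_pow, mul_div_assoc', mul_div_assoc',
      ← add_div]
  rw [ex l1 hd1, ex l2 hd2, mul_lt_mul_iff_right₀ (by positivity : (0:ℝ) < 1 / (A + B))]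
  rw [div_lt_div_iff₀ (by positivity) (by positivity)]
  have hab : 4 * (A * B) - (A + B) * (A + B - 1) ≥ 0 := by nlinarith
  have h21 : 0 < l2 - l1 := sub_pos.mpr h12
  have hABp : (0:ℝ) < A * B := mul_pos (by linarith) (by linarith)
  have h8 : (0:ℝ) < 8 * (A * B) * (A + B - 1) := by nlinarith
  have h3 : (0:ℝ) ≤ 4 * (A * B) - (A + B - 1) ^ 2 := by nlinarith
  have hmid : (0:ℝ) ≤ 4 * (A + B) * (4 * (A * B) - (A + B - 1) ^ 2) :=
    mul_nonneg (by linarith) h3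
  nlinarith [mul_pos h21 h8,
    mul_nonneg (mul_nonneg h21.le hmid) (by linarith : (0:ℝ) ≤ l1 + l2),
    mul_nonneg (mul_nonneg h21.le (by nlinarith : (0:ℝ) ≤ 32 * (4 * (A * B) - (A + B) * (A + B - 1)))) (mul_nonneg hl1 hl2)]

/-- For `K = 1` with `a_{10}, a_{11} > 1` and `(a_{10} − a_{11})² − a_{1•} ≤ 0`, the LOOCV
squared prediction error is strictly decreasing on `[0, ∞)`; hence its infimum is not
attained at any finite `λ`. -/
theorem stmt14 (a10 a11 : ℕ) (h0 : 1 < a10) (h1 : 1 < a11)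
    (hle : ((a10 : ℝ) - (a11 : ℝ)) ^ 2 - ((a10 : ℝ) + (a11 : ℝ)) ≤ 0) :
    (∀ l1 l2 : ℝ, 0 ≤ l1 → l1 < l2 →
      loocvPE 1 (fun _ => a10) (fun _ => a11) l2 <
        loocvPE 1 (fun _ => a10) (fun _ => a11) l1) ∧
    ¬ ∃ l : ℝ, 0 ≤ l ∧ ∀ l' : ℝ, 0 ≤ l' →
      loocvPE 1 (fun _ => a10) (fun _ => a11) l ≤
        loocvPE 1 (fun _ => a10) (fun _ => a11) l' := by
  have hA : (2:ℝ) ≤ (a10 : ℝ) := by exact_mod_cast h0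
  have hB : (2:ℝ) ≤ (a11 : ℝ) := by exact_mod_cast h1
  have hdec : ∀ l1 l2 : ℝ, 0 ≤ l1 → l1 < l2 →
      loocvPE 1 (fun _ => a10) (fun _ => a11) l2 <
        loocvPE 1 (fun _ => a10) (fun _ => a11) l1 := by
    intro l1 l2 hl1 h12
    rw [loocvPE_one, loocvPE_one]
    exact key_dec _ _ _ _ hA hB hle hl1 h12
  refine ⟨hdec, ?_⟩
  rintro ⟨l, hl, hmin⟩
  have h := hmin (l + 1) (by linarith)
  have h' := hdec l (l + 1) hl (by linarith)
  linarith
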